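/- Let l ≥ 2, let {e_1,…,e_l} be the standard orthonormal basis of ℝ^l with inner product (·|·), and let Δ be the root system of type C_l consisting of the short roots ±(e_i−e_j)/√2 and ±(e_i+e_j)/√2 for 1 ≤ i < j ≤ l and the long roots ±√2·e_i for 1 ≤ i ≤ l. Let α_1 = (e_1−e_2)/√2, …, α_{l−1} = (e_{l−1}−e_l)/√2, α_l = √2·e_l be the simple roots; they form a basis of ℝ^l, and every root α has unique integer coordinates α = ∑_{i=1}^l k_i α_i. For k ∈ ℤ let ρ(k) ∈ {0,1} with ρ(k) ≡ k (mod 2), and define p(α) = ∑_{i=1}^{l−1} ρ(k_i) α_i and s(α) = ∑_{i=1}^{l−1} (k_i − ρ(k_i)) α_i. Suppose α is a long root and β is a root such that α + β is also a root. Then (α|β) = −1, p(α+β) = p(β), and s(α+β) = s(α) + s(β). -/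

import Mathlib

open scoped BigOperators RealInnerProductSpace

/-- The standard orthonormal basis vector `e_i` of `ℝ^l`. -/
noncomputable def Ce (l : ℕ) (i : Fin l) : EuclideanSpace ℝ (Fin l) :=
  EuclideanSpace.single i 1

/-- The short roots `±(e_i - e_j)/√2`, `±(e_i + e_j)/√2` for `i < j`, of type `C_l`. -/
noncomputable def CshortRoots (l : ℕ) : Set (EuclideanSpace ℝ (Fin l)) :=
  {x | ∃ i j : Fin l, i < j ∧
    (x = (Real.sqrt 2)⁻¹ • (Ce l i - Ce l j) ∨ x = -((Real.sqrt 2)⁻¹ • (Ce l i - Ce l j)) ∨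
     x = (Real.sqrt 2)⁻¹ • (Ce l i + Ce l j) ∨ x = -((Real.sqrt 2)⁻¹ • (Ce l i + Ce l j)))}

/-- The long roots `±√2·e_i` of type `C_l`. -/
noncomputable def ClongRoots (l : ℕ) : Set (EuclideanSpace ℝ (Fin l)) :=
  {x | ∃ i : Fin l, x = Real.sqrt 2 • Ce l i ∨ x = -(Real.sqrt 2 • Ce l i)}

/-- The root system of type `C_l`. -/
noncomputable def Croots (l : ℕ) : Set (EuclideanSpace ℝ (Fin l)) :=
  CshortRoots l ∪ ClongRoots l

/-- The simple roots: `α_i = (e_i - e_{i+1})/√2` for `i < l-1`, and `α_l = √2·e_l`. -/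
noncomputable def Csimple (l : ℕ) (i : Fin l) : EuclideanSpace ℝ (Fin l) :=
  if h : (i : ℕ) + 1 < l then (Real.sqrt 2)⁻¹ • (Ce l i - Ce l ⟨(i : ℕ) + 1, h⟩)
  else Real.sqrt 2 • Ce l i

/-- `Ccoords l α k` says `k` is the coordinate vector of `α` in the simple root basis:
`α = ∑ k_i • α_i`. -/
noncomputable def Ccoords (l : ℕ) (α : EuclideanSpace ℝ (Fin l)) (k : Fin l → ℤ) : Prop :=
  α = ∑ i : Fin l, (k i : ℝ) • Csimple l i

/-- `p(α) = ∑_{i=1}^{l-1} ρ(k_i)·α_i`, computed from the coordinate vector `k` of `α`;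
here `ρ(k) = k % 2 ∈ {0,1}` with `ρ(k) ≡ k (mod 2)`. -/
noncomputable def Cp (l : ℕ) (k : Fin l → ℤ) : EuclideanSpace ℝ (Fin l) :=
  ∑ i : Fin l, (if (i : ℕ) + 1 < l then ((k i % 2 : ℤ) : ℝ) else 0) • Csimple l i

/-- `s(α) = ∑_{i=1}^{l-1} (k_i - ρ(k_i))·α_i`, computed from the coordinate vector `k`. -/
noncomputable def Cs (l : ℕ) (k : Fin l → ℤ) : EuclideanSpace ℝ (Fin l) :=
  ∑ i : Fin l, (if (i : ℕ) + 1 < l then ((k i - k i % 2 : ℤ) : ℝ) else 0) • Csimple l i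

/- ---------- auxiliary lemmas ---------- -/

lemma inner_Ce (l : ℕ) (i j : Fin l) : ⟪Ce l i, Ce l j⟫ = if i = j then (1:ℝ) else 0 := by
  simp [Ce, EuclideanSpace.inner_single_left, EuclideanSpace.single_apply, eq_comm]

lemma sqrt2_mul_self : Real.sqrt 2 * Real.sqrt 2 = 2 := Real.mul_self_sqrt (by norm_num)

lemma sqrt2_ne : Real.sqrt 2 ≠ 0 := by positivity

lemma sqrt2_cancel (c : ℝ) : Real.sqrt 2 * ((Real.sqrt 2)⁻¹ * c) = c := by
  rw [← mul_assoc, mul_inv_cancel₀ sqrt2_ne, one_mul]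

lemma sqrt2_sq (c : ℝ) : Real.sqrt 2 * (Real.sqrt 2 * c) = 2 * c := by
  rw [← mul_assoc, sqrt2_mul_self]

lemma short_norm {l : ℕ} {x : EuclideanSpace ℝ (Fin l)} (h : x ∈ CshortRoots l) :
    ⟪x, x⟫ = (1:ℝ) := by
  obtain ⟨i, j, hij, h | h | h | h⟩ := h <;> subst h <;>
  · simp only [real_inner_smul_left, real_inner_smul_right, inner_sub_left, inner_sub_right,
      inner_add_left, inner_add_right, inner_neg_left, inner_neg_right, inner_Ce,
      if_pos rfl, if_neg hij.ne, if_neg hij.ne', neg_neg, mul_neg, neg_mul]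
    rw [← sqrt2_mul_self]
    field_simp
    norm_num [Real.sqrt_sq, Real.sq_sqrt]

lemma long_norm {l : ℕ} {x : EuclideanSpace ℝ (Fin l)} (h : x ∈ ClongRoots l) :
    ⟪x, x⟫ = (2:ℝ) := by
  obtain ⟨i, h | h⟩ := h <;> subst h <;>
  · simp only [real_inner_smul_left, real_inner_smul_right, inner_neg_left, inner_neg_right,
      inner_Ce, if_pos rfl, neg_neg, mul_neg, neg_mul, mul_one]
    rw [sqrt2_sq]
    simp

lemma root_norm {l : ℕ} {x : EuclideanSpace ℝ (Fin l)} (h : x ∈ Croots l) :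
    ⟪x, x⟫ = (1:ℝ) ∨ ⟪x, x⟫ = (2:ℝ) := by
  rcases h with h | h
  · exact Or.inl (short_norm h)
  · exact Or.inr (long_norm h)

lemma int_cases {x : ℝ} (h : x = 0 ∨ x = 1 ∨ x = -1 ∨ x = 2 ∨ x = -2) :
    ∃ n : ℤ, x = (n : ℝ) := by
  rcases h with h | h | h | h | h <;> subst h <;>
    [exact ⟨0, by norm_num⟩; exact ⟨1, by norm_num⟩; exact ⟨-1, by norm_num⟩;
     exact ⟨2, by norm_num⟩; exact ⟨-2, by norm_num⟩]

lemma long_inner_int {l : ℕ} {α β : EuclideanSpace ℝ (Fin l)} (hα : α ∈ ClongRoots l)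
    (hβ : β ∈ Croots l) : ∃ n : ℤ, ⟪α, β⟫ = (n : ℝ) := by
  obtain ⟨i, hi | hi⟩ := hα <;> subst hi <;>
    rcases hβ with ⟨a, b, hab, h | h | h | h⟩ | ⟨a, h | h⟩ <;> subst h <;>
    simp only [real_inner_smul_left, real_inner_smul_right, inner_sub_right, inner_add_right,
      inner_neg_right, inner_neg_left, neg_neg, mul_neg, neg_mul, inner_Ce,
      sqrt2_cancel, sqrt2_sq] <;>
    split_ifs <;>
    first
      | exact absurd ((‹i = a›).symm.trans ‹i = b›) hab.ne
      | (apply int_cases; norm_num)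

noncomputable def Ssum (l : ℕ) (j : Fin l) (x : EuclideanSpace ℝ (Fin l)) : ℝ :=
  ∑ m ∈ Finset.univ.filter (· ≤ j), ⟪Ce l m, x⟫

lemma Ssum_add (l : ℕ) (j : Fin l) (x y : EuclideanSpace ℝ (Fin l)) :
    Ssum l j (x + y) = Ssum l j x + Ssum l j y := by
  simp [Ssum, inner_add_right, Finset.sum_add_distrib]

lemma Ssum_smul (l : ℕ) (j : Fin l) (c : ℝ) (x : EuclideanSpace ℝ (Fin l)) :
    Ssum l j (c • x) = c * Ssum l j x := by
  simp only [Ssum, real_inner_smul_right, Finset.mul_sum]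

lemma Ssum_neg (l : ℕ) (j : Fin l) (x : EuclideanSpace ℝ (Fin l)) :
    Ssum l j (-x) = -Ssum l j x := by
  simp [Ssum, inner_neg_right]

lemma Ssum_sub (l : ℕ) (j : Fin l) (x y : EuclideanSpace ℝ (Fin l)) :
    Ssum l j (x - y) = Ssum l j x - Ssum l j y := by
  simp [Ssum, inner_sub_right, Finset.sum_sub_distrib]

lemma Ssum_sum (l : ℕ) (j : Fin l) {ι : Type*} (s : Finset ι)
    (f : ι → EuclideanSpace ℝ (Fin l)) :
    Ssum l j (∑ i ∈ s, f i) = ∑ i ∈ s, Ssum l j (f i) := by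
  simp only [Ssum, inner_sum]
  rw [Finset.sum_comm]

lemma Ssum_single (l : ℕ) (j i : Fin l) :
    Ssum l j (Ce l i) = if i ≤ j then 1 else 0 := by
  simp only [Ssum, inner_Ce]
  rw [Finset.sum_ite_eq' (Finset.univ.filter (· ≤ j)) i (fun _ => (1:ℝ))]
  simp

lemma Ssum_simple (l : ℕ) (j i : Fin l) :
    Ssum l j (Csimple l i) =
      if (i : ℕ) + 1 < l then (if i = j then (Real.sqrt 2)⁻¹ else 0)
      else (if i ≤ j then Real.sqrt 2 else 0) := by
  unfold Csimple
  by_cases h : (i : ℕ) + 1 < l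
  · rw [dif_pos h, if_pos h, Ssum_smul, Ssum_sub, Ssum_single, Ssum_single]
    rcases lt_trichotomy i j with hij | hij | hij
    · have v := Fin.lt_def.mp hij
      rw [if_neg hij.ne, if_pos hij.le,
        if_pos (show (⟨(i:ℕ)+1, h⟩ : Fin l) ≤ j from Fin.le_def.mpr (by simpa using v))]
      norm_num
    · subst hij
      rw [if_pos rfl, if_pos le_rfl,
        if_neg (show ¬ (⟨(i:ℕ)+1, h⟩ : Fin l) ≤ i from fun hc => by
          have := Fin.le_def.mp hc; simp at this)]
      norm_num
    · have v := Fin.lt_def.mp hij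
      rw [if_neg hij.ne',
        if_neg (show ¬ i ≤ j from fun hc => by have := Fin.le_def.mp hc; omega),
        if_neg (show ¬ (⟨(i:ℕ)+1, h⟩ : Fin l) ≤ j from fun hc => by
          have := Fin.le_def.mp hc; simp at this; omega)]
      norm_num
  · rw [dif_neg h, if_neg h, Ssum_smul, Ssum_single]
    split_ifs <;> norm_num

lemma coords_val {l : ℕ} {α : EuclideanSpace ℝ (Fin l)} {k : Fin l → ℤ}
    (hk : Ccoords l α k) (j : Fin l) :
    (k j : ℝ) = if (j : ℕ) + 1 < l then Real.sqrt 2 * Ssum l j α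
      else (Real.sqrt 2)⁻¹ * Ssum l j α := by
  have h0 : Ssum l j α = ∑ i : Fin l, (k i : ℝ) * Ssum l j (Csimple l i) := by
    rw [hk, Ssum_sum]
    exact Finset.sum_congr rfl fun i _ => Ssum_smul l j _ _
  by_cases hj : (j : ℕ) + 1 < l
  · have key : ∀ i : Fin l, (k i : ℝ) * Ssum l j (Csimple l i) =
        if i = j then (k j : ℝ) * (Real.sqrt 2)⁻¹ else 0 := by
      intro i
      rw [Ssum_simple]
      by_cases hi : (i : ℕ) + 1 < l
      · rw [if_pos hi]
        by_cases hij : i = j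
        · subst hij; rw [if_pos rfl, if_pos rfl]
        · rw [if_neg hij, if_neg hij, mul_zero]
      · have h1 : ¬ i ≤ j := by
          rw [Fin.le_def]; have := i.isLt; omega
        have h2 : i ≠ j := by
          intro h; apply h1; rw [h]
        rw [if_neg hi, if_neg h1, if_neg h2, mul_zero]
    rw [if_pos hj, h0, Finset.sum_congr rfl fun i _ => key i,
      Finset.sum_ite_eq' Finset.univ j (fun _ => (k j : ℝ) * (Real.sqrt 2)⁻¹)]
    simp only [Finset.mem_univ, if_pos]
    rw [show Real.sqrt 2 * ((k j : ℝ) * (Real.sqrt 2)⁻¹)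
        = (k j : ℝ) * (Real.sqrt 2 * (Real.sqrt 2)⁻¹) by ring,
      mul_inv_cancel₀ sqrt2_ne, mul_one]
  · have key : ∀ i : Fin l, (k i : ℝ) * Ssum l j (Csimple l i) =
        if i = j then (k j : ℝ) * Real.sqrt 2 else 0 := by
      intro i
      rw [Ssum_simple]
      by_cases hi : (i : ℕ) + 1 < l
      · rw [if_pos hi]
        have h2 : i ≠ j := by
          intro h; subst h; exact hj hi
        rw [if_neg h2, if_neg h2, mul_zero]
      · have h2 : i = j := by
          have := i.isLt; have := j.isLt
          exact Fin.val_inj.mp (by omega)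
        subst h2
        rw [if_neg hi, if_pos le_rfl, if_pos rfl]
    rw [if_neg hj, h0, Finset.sum_congr rfl fun i _ => key i,
      Finset.sum_ite_eq' Finset.univ j (fun _ => (k j : ℝ) * Real.sqrt 2)]
    simp only [Finset.mem_univ, if_pos]
    rw [show (Real.sqrt 2)⁻¹ * ((k j : ℝ) * Real.sqrt 2)
        = (k j : ℝ) * (Real.sqrt 2 * (Real.sqrt 2)⁻¹) by ring,
      mul_inv_cancel₀ sqrt2_ne, mul_one]

lemma coords_add {l : ℕ} {α β : EuclideanSpace ℝ (Fin l)} {ka kb kc : Fin l → ℤ}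
    (hka : Ccoords l α ka) (hkb : Ccoords l β kb) (hkc : Ccoords l (α + β) kc)
    (j : Fin l) : kc j = ka j + kb j := by
  have h1 := coords_val hka j
  have h2 := coords_val hkb j
  have h3 := coords_val hkc j
  rw [Ssum_add] at h3
  have : (kc j : ℝ) = (ka j : ℝ) + (kb j : ℝ) := by
    by_cases hj : (j : ℕ) + 1 < l
    · rw [if_pos hj] at h1 h2 h3
      rw [h1, h2, h3, mul_add]
    · rw [if_neg hj] at h1 h2 h3
      rw [h1, h2, h3, mul_add]
  exact_mod_cast this

lemma long_coord_even {l : ℕ} {α : EuclideanSpace ℝ (Fin l)} {ka : Fin l → ℤ}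
    (hα : α ∈ ClongRoots l) (hka : Ccoords l α ka) {j : Fin l} (hj : (j : ℕ) + 1 < l) :
    ka j % 2 = 0 := by
  have h1 := coords_val hka j
  rw [if_pos hj] at h1
  obtain ⟨i, hi | hi⟩ := hα <;> subst hi
  · rw [Ssum_smul, Ssum_single, sqrt2_sq] at h1
    have h2 : (ka j : ℝ) = ((2 * (if i ≤ j then 1 else 0) : ℤ) : ℝ) := by
      rw [h1]; split_ifs <;> norm_num
    have h3 := Int.cast_injective h2
    split_ifs at h3 <;> omega
  · rw [Ssum_neg, Ssum_smul, Ssum_single,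
      show Real.sqrt 2 * -(Real.sqrt 2 * (if i ≤ j then (1:ℝ) else 0))
        = -(2 * (if i ≤ j then (1:ℝ) else 0)) by rw [← sqrt2_sq]; ring] at h1
    have h2 : (ka j : ℝ) = ((-(2 * (if i ≤ j then 1 else 0)) : ℤ) : ℝ) := by
      rw [h1]; split_ifs <;> norm_num
    have h3 := Int.cast_injective h2
    split_ifs at h3 <;> omega

/-- If `α` is a long root of `C_l` and `β` a root such that `α + β` is a root, then
`(α|β) = -1`, `p(α+β) = p(β)` and `s(α+β) = s(α) + s(β)`. -/
theorem stmt_16 (l : ℕ) (hl : 2 ≤ l) (α β : EuclideanSpace ℝ (Fin l))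
    (hα : α ∈ ClongRoots l) (hβ : β ∈ Croots l) (hαβ : α + β ∈ Croots l)
    (ka kb kc : Fin l → ℤ)
    (hka : Ccoords l α ka) (hkb : Ccoords l β kb) (hkc : Ccoords l (α + β) kc) :
    (inner ℝ α β : ℝ) = -1 ∧ Cp l kc = Cp l kb ∧ Cs l kc = Cs l ka + Cs l kb := by
  obtain ⟨n, hn⟩ := long_inner_int hα hβ
  have hA := long_norm hα
  have e1 := real_inner_add_add_self α β
  have hub : 2 * (n : ℝ) ≤ -1 ∧ (-3 : ℝ) ≤ 2 * (n : ℝ) := by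
    rcases root_norm hβ with hB | hB <;> rcases root_norm hαβ with hC | hC <;>
      exact ⟨by linarith, by linarith⟩
  have hi1 : 2 * n ≤ (-1 : ℤ) := by exact_mod_cast hub.1
  have hi2 : (-3 : ℤ) ≤ 2 * n := by exact_mod_cast hub.2
  have hn1 : n = -1 := by omega
  subst hn1
  have hadd : ∀ j, kc j = ka j + kb j := coords_add hka hkb hkc
  refine ⟨hn.trans (by norm_num), ?_, ?_⟩
  · unfold Cp
    refine Finset.sum_congr rfl fun i _ => ?_
    by_cases hi : (i : ℕ) + 1 < l
    · rw [if_pos hi, if_pos hi]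
      have he := long_coord_even hα hka hi
      have h4 := hadd i
      rw [show kc i % 2 = kb i % 2 by omega]
    · rw [if_neg hi, if_neg hi]
  · unfold Cs
    rw [← Finset.sum_add_distrib]
    refine Finset.sum_congr rfl fun i _ => ?_
    by_cases hi : (i : ℕ) + 1 < l
    · rw [if_pos hi, if_pos hi, if_pos hi, ← add_smul]
      have he := long_coord_even hα hka hi
      have h4 := hadd i
      have h5 : kc i - kc i % 2 = (ka i - ka i % 2) + (kb i - kb i % 2) := by omega
      congr 1
      exact_mod_cast h5
    · rw [if_neg hi, if_neg hi, if_neg hi]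
      simp
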